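/- Let ℓ ∈ ℝ, m ∈ ℂ, and t > 0, and set a := ℓ/2 − im, ω := ℓ/2 + im. For any ξ ∈ ℝ³ and any C² function ψ : (0,∞) → ℂ⁴, the composition of the symbol Dirac operator D(t,∂_t,iξ) := iγ⁰ d/dt − t^{−ℓ}(ξ₁γ¹ + ξ₂γ² + ξ₃γ³) + i(3ℓ/(2t))γ⁰ − (m/t)I₄ with the complementary operator D^co(t,∂_t,iξ) := i t^{−ℓ/2} γ⁰ (t^{im}γ^U + t^{−im}γ^L) d/dt − t^{−3ℓ/2} (ξ₁γ¹ + ξ₂γ² + ξ₃γ³)(t^{im}γ^U + t^{−im}γ^L) satisfies, when applied to ψ: D(t,∂_t,iξ)[D^co(t,∂_t,iξ)ψ](t) = −(t^{−a}γ^U + t^{−ω}γ^L) [ ψ''(t) + t^{−2ℓ}|ξ|² ψ(t) + t^{−1}(ℓ I₄ + 2im γ⁰) ψ'(t) ]. -/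

import Mathlib

noncomputable section
open Matrix Complex

def σ1 : Matrix (Fin 2) (Fin 2) ℂ := !![0, 1; 1, 0]
def σ2 : Matrix (Fin 2) (Fin 2) ℂ := !![0, -I; I, 0]
def σ3 : Matrix (Fin 2) (Fin 2) ℂ := !![1, 0; 0, -1]

def blk (A B C D : Matrix (Fin 2) (Fin 2) ℂ) : Matrix (Fin 4) (Fin 4) ℂ :=
  (Matrix.reindex finSumFinEquiv finSumFinEquiv) (Matrix.fromBlocks A B C D)

def γ0 : Matrix (Fin 4) (Fin 4) ℂ := blk 1 0 0 (-1)
def γ1 : Matrix (Fin 4) (Fin 4) ℂ := blk 0 σ1 (-σ1) 0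
def γ2 : Matrix (Fin 4) (Fin 4) ℂ := blk 0 σ2 (-σ2) 0
def γ3 : Matrix (Fin 4) (Fin 4) ℂ := blk 0 σ3 (-σ3) 0
def γU : Matrix (Fin 4) (Fin 4) ℂ := ((1 : ℂ)/2) • (1 + γ0)
def γL : Matrix (Fin 4) (Fin 4) ℂ := ((1 : ℂ)/2) • (1 - γ0)

/-- Principal power t^z for t > 0. -/
def tp (t : ℝ) (z : ℂ) : ℂ := ((t : ℂ)) ^ z

/-- ξ·γ = ξ₁γ¹ + ξ₂γ² + ξ₃γ³. -/
def Γξ (ξ1 ξ2 ξ3 : ℝ) : Matrix (Fin 4) (Fin 4) ℂ :=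
  (ξ1 : ℂ) • γ1 + (ξ2 : ℂ) • γ2 + (ξ3 : ℂ) • γ3

/-- t^{im} γ^U + t^{−im} γ^L. -/
def Qm (m : ℂ) (t : ℝ) : Matrix (Fin 4) (Fin 4) ℂ :=
  tp t (I * m) • γU + tp t (-(I * m)) • γL

/-- The complementary symbol operator applied to ψ:
D^co ψ(t) = i t^{−ℓ/2} γ⁰(t^{im}γ^U + t^{−im}γ^L) ψ'(t)
 − t^{−3ℓ/2} (ξ·γ)(t^{im}γ^U + t^{−im}γ^L) ψ(t). -/
def Dco (ℓ : ℝ) (m : ℂ) (ξ1 ξ2 ξ3 : ℝ) (ψ : ℝ → Fin 4 → ℂ) : ℝ → Fin 4 → ℂ :=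
  fun s =>
    (I * tp s (-((ℓ : ℂ) / 2))) • ((γ0 * Qm m s).mulVec (deriv ψ s))
      - tp s (-(3 * (ℓ : ℂ) / 2)) • ((Γξ ξ1 ξ2 ξ3 * Qm m s).mulVec (ψ s))


/-! ### block matrix algebra -/

lemma blk_mul (A B C D A' B' C' D' : Matrix (Fin 2) (Fin 2) ℂ) :
    blk A B C D * blk A' B' C' D'
      = blk (A*A'+B*C') (A*B'+B*D') (C*A'+D*C') (C*B'+D*D') := by
  simp [blk, Matrix.reindex_apply, Matrix.submatrix_mul_equiv, Matrix.fromBlocks_multiply]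

lemma blk_one : (1 : Matrix (Fin 4) (Fin 4) ℂ) = blk 1 0 0 1 := by
  simp [blk, Matrix.reindex_apply, Matrix.fromBlocks_one]

lemma blk_neg (A B C D : Matrix (Fin 2) (Fin 2) ℂ) :
    -(blk A B C D) = blk (-A) (-B) (-C) (-D) := by
  ext i j
  simp [blk, ← Matrix.fromBlocks_neg, Matrix.neg_apply]

lemma blk_congr {A B C D A' B' C' D' : Matrix (Fin 2) (Fin 2) ℂ}
    (h1 : A = A') (h2 : B = B') (h3 : C = C') (h4 : D = D') :
    blk A B C D = blk A' B' C' D' := by rw [h1, h2, h3, h4]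

lemma s11 : σ1 * σ1 = 1 := by
  simp [σ1, Matrix.mul_fin_two]; exact Matrix.one_fin_two.symm
lemma s22 : σ2 * σ2 = 1 := by
  simp [σ2, Matrix.mul_fin_two, Complex.I_mul_I]; exact Matrix.one_fin_two.symm
lemma s33 : σ3 * σ3 = 1 := by
  simp [σ3, Matrix.mul_fin_two]; exact Matrix.one_fin_two.symm
lemma s12 : σ1 * σ2 = -(σ2 * σ1) := by simp [σ1, σ2, Matrix.mul_fin_two]
lemma s13 : σ1 * σ3 = -(σ3 * σ1) := by simp [σ1, σ3, Matrix.mul_fin_two]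
lemma s23 : σ2 * σ3 = -(σ3 * σ2) := by simp [σ2, σ3, Matrix.mul_fin_two]

lemma g00 : γ0 * γ0 = 1 := by
  rw [γ0, blk_mul, blk_one]; apply blk_congr <;> simp
lemma g01 : γ0 * γ1 = -(γ1 * γ0) := by
  rw [γ0, γ1, blk_mul, blk_mul, blk_neg]; apply blk_congr <;> simp
lemma g02 : γ0 * γ2 = -(γ2 * γ0) := by
  rw [γ0, γ2, blk_mul, blk_mul, blk_neg]; apply blk_congr <;> simp
lemma g03 : γ0 * γ3 = -(γ3 * γ0) := by
  rw [γ0, γ3, blk_mul, blk_mul, blk_neg]; apply blk_congr <;> simp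
lemma g11 : γ1 * γ1 = -1 := by
  rw [γ1, blk_mul, blk_one, blk_neg]; apply blk_congr <;> simp [s11]
lemma g22 : γ2 * γ2 = -1 := by
  rw [γ2, blk_mul, blk_one, blk_neg]; apply blk_congr <;> simp [s22]
lemma g33 : γ3 * γ3 = -1 := by
  rw [γ3, blk_mul, blk_one, blk_neg]; apply blk_congr <;> simp [s33]
lemma g12 : γ1 * γ2 = -(γ2 * γ1) := by
  rw [γ1, γ2, blk_mul, blk_mul, blk_neg]; apply blk_congr <;>
    simp [s12, Matrix.neg_mul, Matrix.mul_neg]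
lemma g13 : γ1 * γ3 = -(γ3 * γ1) := by
  rw [γ1, γ3, blk_mul, blk_mul, blk_neg]; apply blk_congr <;>
    simp [s13, Matrix.neg_mul, Matrix.mul_neg]
lemma g23 : γ2 * γ3 = -(γ3 * γ2) := by
  rw [γ2, γ3, blk_mul, blk_mul, blk_neg]; apply blk_congr <;>
    simp [s23, Matrix.neg_mul, Matrix.mul_neg]

lemma g0U : γ0 * γU = γU := by
  rw [γU, mul_smul_comm, mul_add, mul_one, g00]
  rw [add_comm]
lemma g0L : γ0 * γL = -γL := by
  rw [γL, mul_smul_comm, mul_sub, mul_one, g00]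
  rw [← smul_neg]; congr 1; abel
lemma gU0 : γU * γ0 = γU := by
  rw [γU, smul_mul_assoc, add_mul, one_mul, g00]
  rw [add_comm]
lemma gL0 : γL * γ0 = -γL := by
  rw [γL, smul_mul_assoc, sub_mul, one_mul, g00]
  rw [← smul_neg]; congr 1; abel

lemma g0Γ (ξ1 ξ2 ξ3 : ℝ) : γ0 * Γξ ξ1 ξ2 ξ3 = -(Γξ ξ1 ξ2 ξ3 * γ0) := by
  simp only [Γξ, mul_add, add_mul, mul_smul_comm, smul_mul_assoc, g01, g02, g03]
  module

lemma Γsq (ξ1 ξ2 ξ3 : ℝ) :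
    Γξ ξ1 ξ2 ξ3 * Γξ ξ1 ξ2 ξ3 = (-(((ξ1^2+ξ2^2+ξ3^2 : ℝ) : ℂ))) • 1 := by
  simp only [Γξ, mul_add, add_mul, mul_smul_comm, smul_mul_assoc,
    g11, g22, g33, g12, g13, g23]
  push_cast
  module

/-! ### mulVec reductions -/

lemma mv_mv (M N : Matrix (Fin 4) (Fin 4) ℂ) (w : Fin 4 → ℂ) :
    M.mulVec (N.mulVec w) = (M * N).mulVec w := (Matrix.mulVec_mulVec w M N)

lemma gv0U (w : Fin 4 → ℂ) : γ0.mulVec (γU.mulVec w) = γU.mulVec w := by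
  rw [mv_mv, g0U]
lemma gv0L (w : Fin 4 → ℂ) : γ0.mulVec (γL.mulVec w) = -(γL.mulVec w) := by
  rw [mv_mv, g0L, Matrix.neg_mulVec]
lemma gvU0 (w : Fin 4 → ℂ) : γU.mulVec (γ0.mulVec w) = γU.mulVec w := by
  rw [mv_mv, gU0]
lemma gvL0 (w : Fin 4 → ℂ) : γL.mulVec (γ0.mulVec w) = -(γL.mulVec w) := by
  rw [mv_mv, gL0, Matrix.neg_mulVec]
lemma gv0ΓU (ξ1 ξ2 ξ3 : ℝ) (w : Fin 4 → ℂ) :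
    γ0.mulVec ((Γξ ξ1 ξ2 ξ3 * γU).mulVec w) = -((Γξ ξ1 ξ2 ξ3 * γU).mulVec w) := by
  rw [mv_mv, ← mul_assoc, g0Γ, Matrix.neg_mul, mul_assoc, Matrix.neg_mulVec, g0U]
lemma gv0ΓL (ξ1 ξ2 ξ3 : ℝ) (w : Fin 4 → ℂ) :
    γ0.mulVec ((Γξ ξ1 ξ2 ξ3 * γL).mulVec w) = (Γξ ξ1 ξ2 ξ3 * γL).mulVec w := by
  rw [mv_mv, ← mul_assoc, g0Γ, Matrix.neg_mul, mul_assoc, g0L, Matrix.mul_neg, neg_neg]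
lemma gvΓU (ξ1 ξ2 ξ3 : ℝ) (w : Fin 4 → ℂ) :
    (Γξ ξ1 ξ2 ξ3).mulVec (γU.mulVec w) = (Γξ ξ1 ξ2 ξ3 * γU).mulVec w := mv_mv _ _ _
lemma gvΓL (ξ1 ξ2 ξ3 : ℝ) (w : Fin 4 → ℂ) :
    (Γξ ξ1 ξ2 ξ3).mulVec (γL.mulVec w) = (Γξ ξ1 ξ2 ξ3 * γL).mulVec w := mv_mv _ _ _
lemma gvΓΓU (ξ1 ξ2 ξ3 : ℝ) (w : Fin 4 → ℂ) :
    (Γξ ξ1 ξ2 ξ3).mulVec ((Γξ ξ1 ξ2 ξ3 * γU).mulVec w)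
      = (-(((ξ1^2+ξ2^2+ξ3^2 : ℝ) : ℂ))) • γU.mulVec w := by
  rw [mv_mv, ← mul_assoc, Γsq, Matrix.smul_mul, one_mul, Matrix.smul_mulVec]
lemma gvΓΓL (ξ1 ξ2 ξ3 : ℝ) (w : Fin 4 → ℂ) :
    (Γξ ξ1 ξ2 ξ3).mulVec ((Γξ ξ1 ξ2 ξ3 * γL).mulVec w)
      = (-(((ξ1^2+ξ2^2+ξ3^2 : ℝ) : ℂ))) • γL.mulVec w := by
  rw [mv_mv, ← mul_assoc, Γsq, Matrix.smul_mul, one_mul, Matrix.smul_mulVec]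

/-! ### scalar power -/

lemma tp_eq (t : ℝ) (ht : 0 < t) (z : ℂ) :
    tp t z = Complex.exp ((Real.log t : ℂ) * z) := by
  rw [tp, Complex.cpow_def_of_ne_zero (by exact_mod_cast ht.ne'),
    Complex.ofReal_log ht.le]

lemma tp_add (t : ℝ) (ht : 0 < t) (z w : ℂ) :
    tp t (z + w) = tp t z * tp t w := by
  rw [tp, tp, tp, Complex.cpow_add _ _ (by exact_mod_cast ht.ne')]

lemma hasDerivAt_tp (t : ℝ) (ht : 0 < t) (z : ℂ) :
    HasDerivAt (fun s => tp s z) (z * tp t z / t) t := by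
  have h1 : HasDerivAt (fun s : ℝ => ((Real.log s : ℝ) : ℂ) * z)
      ((↑(t⁻¹) : ℂ) * z) t :=
    ((Real.hasDerivAt_log ht.ne').ofReal_comp).mul_const z
  have h2 := h1.cexp
  have h3 : HasDerivAt (fun s => tp s z)
      (Complex.exp ((Real.log t : ℂ) * z) * ((↑(t⁻¹) : ℂ) * z)) t := by
    apply h2.congr_of_eventuallyEq
    filter_upwards [Ioi_mem_nhds ht] with s hs
    rw [tp_eq s hs z]
  convert h3 using 1
  rw [tp_eq t ht z]
  push_cast [ht.ne']; field_simp

lemma hasDerivAt_mulVec (M : Matrix (Fin 4) (Fin 4) ℂ) {ψ : ℝ → Fin 4 → ℂ}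
    {v : Fin 4 → ℂ} {t : ℝ} (h : HasDerivAt ψ v t) :
    HasDerivAt (fun s => M.mulVec (ψ s)) (M.mulVec v) t :=
  (LinearMap.toContinuousLinearMap
    ((Matrix.mulVecLin M).restrictScalars ℝ)).hasFDerivAt.comp_hasDerivAt t h

/-! ### the four-term form of Dco -/

lemma Dco_eq (ℓ : ℝ) (m : ℂ) (ξ1 ξ2 ξ3 : ℝ) (ψ : ℝ → Fin 4 → ℂ)
    (s : ℝ) (hs : 0 < s) :
    Dco ℓ m ξ1 ξ2 ξ3 ψ s =
      (I * tp s (-((ℓ:ℂ)/2) + I*m)) • γU.mulVec (deriv ψ s)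
      - (I * tp s (-((ℓ:ℂ)/2) - I*m)) • γL.mulVec (deriv ψ s)
      - tp s (-(3*(ℓ:ℂ)/2) + I*m) • ((Γξ ξ1 ξ2 ξ3 * γU).mulVec (ψ s))
      - tp s (-(3*(ℓ:ℂ)/2) - I*m) • ((Γξ ξ1 ξ2 ξ3 * γL).mulVec (ψ s)) := by
  have hQ0 : γ0 * Qm m s = tp s (I*m) • γU - tp s (-(I*m)) • γL := by
    rw [Qm, mul_add, mul_smul_comm, mul_smul_comm, g0U, g0L, smul_neg]
    abel
  have hQΓ : Γξ ξ1 ξ2 ξ3 * Qm m s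
      = tp s (I*m) • (Γξ ξ1 ξ2 ξ3 * γU) + tp s (-(I*m)) • (Γξ ξ1 ξ2 ξ3 * γL) := by
    rw [Qm, mul_add, mul_smul_comm, mul_smul_comm]
  rw [Dco, hQ0, hQΓ]
  rw [Matrix.sub_mulVec, Matrix.add_mulVec,
    Matrix.smul_mulVec, Matrix.smul_mulVec,
    Matrix.smul_mulVec, Matrix.smul_mulVec]
  rw [show -((ℓ:ℂ)/2) + I*m = -((ℓ:ℂ)/2) + I*m from rfl]
  rw [tp_add s hs (-((ℓ:ℂ)/2)) (I*m),
    show -((ℓ:ℂ)/2) - I*m = -((ℓ:ℂ)/2) + -(I*m) by ring,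
    tp_add s hs (-((ℓ:ℂ)/2)) (-(I*m)),
    show -(3*(ℓ:ℂ)/2) + I*m = -(3*(ℓ:ℂ)/2) + I*m from rfl,
    tp_add s hs (-(3*(ℓ:ℂ)/2)) (I*m),
    show -(3*(ℓ:ℂ)/2) - I*m = -(3*(ℓ:ℂ)/2) + -(I*m) by ring,
    tp_add s hs (-(3*(ℓ:ℂ)/2)) (-(I*m))]
  match_scalars <;> ring

/-- Composition of the symbol Dirac operator with its complementary operator:
D(t,∂_t,iξ)[D^co ψ](t) = −(t^{−a}γ^U + t^{−ω}γ^L)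
 [ψ''(t) + t^{−2ℓ}|ξ|² ψ(t) + t^{−1}(ℓ I₄ + 2im γ⁰) ψ'(t)],
where a = ℓ/2 − im, ω = ℓ/2 + im. -/
theorem dirac_times_complementary
    (ℓ : ℝ) (m : ℂ) (t : ℝ) (ht : 0 < t) (ξ1 ξ2 ξ3 : ℝ)
    (ψ : ℝ → Fin 4 → ℂ)
    (hψ : ∀ s : ℝ, 0 < s → DifferentiableAt ℝ ψ s)
    (hψ' : ∀ s : ℝ, 0 < s → DifferentiableAt ℝ (deriv ψ) s) :
    I • (γ0.mulVec (deriv (Dco ℓ m ξ1 ξ2 ξ3 ψ) t))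
        - tp t (-(ℓ : ℂ)) • ((Γξ ξ1 ξ2 ξ3).mulVec (Dco ℓ m ξ1 ξ2 ξ3 ψ t))
        + (I * (3 * (ℓ : ℂ) / (2 * (t : ℂ)))) • (γ0.mulVec (Dco ℓ m ξ1 ξ2 ξ3 ψ t))
        - (m / (t : ℂ)) • Dco ℓ m ξ1 ξ2 ξ3 ψ t
      = -((tp t (-((ℓ : ℂ) / 2 - I * m)) • γU + tp t (-((ℓ : ℂ) / 2 + I * m)) • γL).mulVec
          (deriv (deriv ψ) t
            + (tp t (-(2 * (ℓ : ℂ))) * ((ξ1 ^ 2 + ξ2 ^ 2 + ξ3 ^ 2 : ℝ) : ℂ)) • ψ t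
            + ((t : ℂ))⁻¹ •
                (((ℓ : ℂ) • (1 : Matrix (Fin 4) (Fin 4) ℂ) + (2 * I * m) • γ0).mulVec
                  (deriv ψ t)))) := by
  set c : ℂ := (ℓ : ℂ) with hc
  set a : ℂ := -(c/2) + I*m with ha
  set b : ℂ := -(c/2) - I*m with hb
  set p : ℂ := -(3*c/2) + I*m with hp
  set q : ℂ := -(3*c/2) - I*m with hq
  have hψt : HasDerivAt ψ (deriv ψ t) t := (hψ t ht).hasDerivAt
  have hψ't : HasDerivAt (deriv ψ) (deriv (deriv ψ) t) t := (hψ' t ht).hasDerivAt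
  -- derivative of Dco
  have hA : HasDerivAt (fun s => (I * tp s a) • γU.mulVec (deriv ψ s))
      ((I * tp t a) • γU.mulVec (deriv (deriv ψ) t)
        + (I * (a * tp t a / t)) • γU.mulVec (deriv ψ t)) t :=
    ((hasDerivAt_tp t ht a).const_mul I).smul (hasDerivAt_mulVec γU hψ't)
  have hB : HasDerivAt (fun s => (I * tp s b) • γL.mulVec (deriv ψ s))
      ((I * tp t b) • γL.mulVec (deriv (deriv ψ) t)
        + (I * (b * tp t b / t)) • γL.mulVec (deriv ψ t)) t :=
    ((hasDerivAt_tp t ht b).const_mul I).smul (hasDerivAt_mulVec γL hψ't)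
  have hC : HasDerivAt (fun s => tp s p • ((Γξ ξ1 ξ2 ξ3 * γU).mulVec (ψ s)))
      (tp t p • (Γξ ξ1 ξ2 ξ3 * γU).mulVec (deriv ψ t)
        + (p * tp t p / t) • (Γξ ξ1 ξ2 ξ3 * γU).mulVec (ψ t)) t :=
    (hasDerivAt_tp t ht p).smul (hasDerivAt_mulVec _ hψt)
  have hD : HasDerivAt (fun s => tp s q • ((Γξ ξ1 ξ2 ξ3 * γL).mulVec (ψ s)))
      (tp t q • (Γξ ξ1 ξ2 ξ3 * γL).mulVec (deriv ψ t)
        + (q * tp t q / t) • (Γξ ξ1 ξ2 ξ3 * γL).mulVec (ψ t)) t :=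
    (hasDerivAt_tp t ht q).smul (hasDerivAt_mulVec _ hψt)
  have hDco : HasDerivAt (Dco ℓ m ξ1 ξ2 ξ3 ψ)
      (((I * tp t a) • γU.mulVec (deriv (deriv ψ) t)
        + (I * (a * tp t a / t)) • γU.mulVec (deriv ψ t))
       - ((I * tp t b) • γL.mulVec (deriv (deriv ψ) t)
        + (I * (b * tp t b / t)) • γL.mulVec (deriv ψ t))
       - (tp t p • (Γξ ξ1 ξ2 ξ3 * γU).mulVec (deriv ψ t)
        + (p * tp t p / t) • (Γξ ξ1 ξ2 ξ3 * γU).mulVec (ψ t))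
       - (tp t q • (Γξ ξ1 ξ2 ξ3 * γL).mulVec (deriv ψ t)
        + (q * tp t q / t) • (Γξ ξ1 ξ2 ξ3 * γL).mulVec (ψ t))) t := by
    apply (((hA.sub hB).sub hC).sub hD).congr_of_eventuallyEq
    filter_upwards [Ioi_mem_nhds ht] with s hs
    rw [Dco_eq ℓ m ξ1 ξ2 ξ3 ψ s hs]
    rfl
  rw [hDco.deriv, Dco_eq ℓ m ξ1 ξ2 ξ3 ψ t ht]
  -- expand all matrix-vector products
  simp only [Matrix.mulVec_add, Matrix.mulVec_sub, Matrix.mulVec_smul,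
    Matrix.add_mulVec, Matrix.smul_mulVec, Matrix.one_mulVec,
    gv0U, gv0L, gv0ΓU, gv0ΓL, gvΓU, gvΓL, gvΓΓU, gvΓΓL, gvU0, gvL0]
  -- normalize powers
  set A : ℂ := tp t (-(c/2)) with hA'
  set B : ℂ := tp t (I*m) with hB'
  set Bi : ℂ := tp t (-(I*m)) with hBi'
  have e1 : tp t a = A * B := by rw [ha, tp_add t ht]
  have e2 : tp t b = A * Bi := by
    rw [hb, show -(c/2) - I*m = -(c/2) + -(I*m) by ring, tp_add t ht]
  have e3 : tp t p = A * (A * (A * B)) := by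
    rw [hp, show -(3*c/2) + I*m = -(c/2) + (-(c/2) + (-(c/2) + I*m)) by ring,
      tp_add t ht, tp_add t ht, tp_add t ht]
  have e4 : tp t q = A * (A * (A * Bi)) := by
    rw [hq, show -(3*c/2) - I*m = -(c/2) + (-(c/2) + (-(c/2) + -(I*m))) by ring,
      tp_add t ht, tp_add t ht, tp_add t ht]
  have e5 : tp t (-c) = A * A := by
    rw [show -c = -(c/2) + -(c/2) by ring, tp_add t ht]
  have e6 : tp t (-(2*c)) = A * (A * (A * A)) := by
    rw [show -(2*c) = -(c/2) + (-(c/2) + (-(c/2) + -(c/2))) by ring,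
      tp_add t ht, tp_add t ht, tp_add t ht]
  have e7 : tp t (-(c/2 - I*m)) = A * B := by
    rw [show -(c/2 - I*m) = -(c/2) + I*m by ring]; exact e1
  have e8 : tp t (-(c/2 + I*m)) = A * Bi := by
    rw [show -(c/2 + I*m) = -(c/2) + -(I*m) by ring, tp_add t ht]
  rw [e1, e2, e3, e4, e5, e6, e7, e8]
  have hI : (I:ℂ) * I = -1 := Complex.I_mul_I
  have htne : (t:ℂ) ≠ 0 := by exact_mod_cast ht.ne'
  match_scalars
  · linear_combination (A*B)*hI
  · linear_combination (a*A*B/(t:ℂ) + 3*c*A*B/(2*(t:ℂ)))*hI - (A*B/(t:ℂ))*ha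
  · linear_combination (A*Bi)*hI
  · linear_combination (b*A*Bi/(t:ℂ) + 3*c*A*Bi/(2*(t:ℂ)))*hI - (A*Bi/(t:ℂ))*hb
  · ring
  · linear_combination (m*A*(A*(A*B))/(t:ℂ))*hI + (I*A*(A*(A*B))/(t:ℂ))*hp
  · ring
  · linear_combination (m*A*(A*(A*Bi))/(t:ℂ))*hI - (I*A*(A*(A*Bi))/(t:ℂ))*hq
  · ring
  · ring
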